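/- The number of Stirling permutations of size n equals the double factorial (2n-1)!!. -/

import Mathlib

/-- A Stirling permutation of size `n`: a word in which each letter `1, …, n` appears
exactly twice (so of length `2n`), and for each letter, every letter lying between its
two occurrences is greater than it. -/
def IsStirlingPerm (n : ℕ) (w : List ℕ) : Prop :=
  w.length = 2 * n ∧ (∀ k ∈ Finset.Icc 1 n, w.count k = 2) ∧
    ∀ i j l : Fin w.length, i < j → j < l → w.get i = w.get l → w.get i < w.get j

open List

lemma third_iff (w : List ℕ) :
    (∀ i j l : Fin w.length, i < j → j < l → w.get i = w.get l → w.get i < w.get j) ↔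
    (∀ k m : ℕ, [k, m, k] <+ w → k < m) := by
  constructor
  · intro H k m hs
    obtain ⟨f, hf⟩ := List.sublist_iff_exists_fin_orderEmbedding_get_eq.mp hs
    have h0 := hf ⟨0, by simp⟩
    have h1 := hf ⟨1, by simp⟩
    have h2 := hf ⟨2, by simp⟩
    simp only [List.get] at h0 h1 h2
    have hlt01 : f ⟨0, by simp⟩ < f ⟨1, by simp⟩ := f.strictMono (by simp [Fin.lt_def])
    have hlt12 : f ⟨1, by simp⟩ < f ⟨2, by simp⟩ := f.strictMono (by simp [Fin.lt_def])
    have := H _ _ _ hlt01 hlt12 (by rw [← h0, ← h2])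
    rwa [← h0, ← h1] at this
  · intro H i j l hij hjl he
    have h3 : [w.get l] <+ w.drop l.val := by
      rw [List.drop_eq_getElem_cons l.isLt]
      simpa using (List.nil_sublist (drop (l.val+1) w)).cons₂ w[l.val]
    have h2 : [w.get j, w.get l] <+ w.drop j.val := by
      rw [List.drop_eq_getElem_cons j.isLt]
      exact (h3.trans (List.drop_sublist_drop_left w hjl)).cons₂ _
    have h1 : [w.get i, w.get j, w.get l] <+ w.drop i.val := by
      rw [List.drop_eq_getElem_cons i.isLt]
      exact (h2.trans (List.drop_sublist_drop_left w hij)).cons₂ _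
    have hs : [w.get i, w.get j, w.get l] <+ w := h1.trans (List.drop_sublist _ _)
    rw [← he] at hs
    exact H _ _ hs

lemma mem_Icc_of_sp {n : ℕ} {w : List ℕ} (h : IsStirlingPerm n w) :
    ∀ x ∈ w, x ∈ Finset.Icc 1 n := by
  obtain ⟨hlen, hcount, -⟩ := h
  intro x hx
  by_contra hxn
  have hsub : insert x (Finset.Icc 1 n) ⊆ (w : Multiset ℕ).toFinset := by
    intro y hy
    rcases Finset.mem_insert.mp hy with rfl | hy
    · simpa using hx
    · have h2 := hcount y hy
      have : y ∈ w := List.count_pos_iff.mp (by omega)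
      simpa using this
  have hsum := Multiset.toFinset_sum_count_eq (w : Multiset ℕ)
  have h1 : ∑ a ∈ insert x (Finset.Icc 1 n), (w : Multiset ℕ).count a ≤
      ∑ a ∈ (w : Multiset ℕ).toFinset, (w : Multiset ℕ).count a :=
    Finset.sum_le_sum_of_subset hsub
  rw [Finset.sum_insert hxn] at h1
  have h2 : ∑ a ∈ Finset.Icc 1 n, (w : Multiset ℕ).count a = 2 * n := by
    rw [Finset.sum_congr rfl (fun k hk => by
      rw [Multiset.coe_count, hcount k hk])]
    simp [Finset.sum_const, Nat.card_Icc, mul_comm]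
  have hx1 : 1 ≤ (w : Multiset ℕ).count x := by
    rw [Multiset.coe_count]
    exact List.count_pos_iff.mpr hx
  rw [h2, hsum] at h1
  simp only [Multiset.coe_card, hlen] at h1
  omega

lemma exists_mem_split {a : ℕ} : ∀ {l : List ℕ}, a ∈ l → ∃ s t, l = s ++ a :: t ∧ a ∉ s := by
  intro l h
  induction l with
  | nil => cases h
  | cons b l ih =>
    rcases List.mem_cons.mp h with rfl | h'
    · exact ⟨[], l, rfl, by simp⟩
    · by_cases hb : a = b
      · subst hb; exact ⟨[], l, rfl, by simp⟩
      · obtain ⟨s, t, rfl, hs⟩ := ih h'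
        exact ⟨b :: s, t, rfl, by simp [hb, hs]⟩

lemma sp_decomp {n : ℕ} {v : List ℕ} (h : IsStirlingPerm (n+1) v) :
    ∃ A B, v = A ++ (n+1) :: (n+1) :: B ∧ (n+1) ∉ A ∧ (n+1) ∉ B := by
  have hthird := (third_iff v).mp h.2.2
  have hmem := mem_Icc_of_sp h
  have hcN : v.count (n+1) = 2 := h.2.1 (n+1) (by simp)
  have hNv : (n+1) ∈ v := List.count_pos_iff.mp (by omega)
  obtain ⟨A, t, rfl, hA⟩ := exists_mem_split hNv
  have hcA : A.count (n+1) = 0 := List.count_eq_zero_of_not_mem hA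
  have hct : t.count (n+1) = 1 := by
    simp [List.count_append, List.count_cons, hcA] at hcN
    omega
  have hNt : (n+1) ∈ t := List.count_pos_iff.mp (by omega)
  obtain ⟨B', C, rfl, hB'⟩ := exists_mem_split hNt
  have hB'nil : B' = [] := by
    rw [List.eq_nil_iff_forall_not_mem]
    intro b hb
    have hsub : [(n+1), b, (n+1)] <+ A ++ (n+1) :: (B' ++ (n+1) :: C) := by
      refine Sublist.trans ?_ (List.sublist_append_right A _)
      refine Sublist.cons₂ _ ?_
      have : [b] ++ [(n+1)] <+ B' ++ (n+1) :: C :=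
        Sublist.append (List.singleton_sublist.mpr hb)
          (List.singleton_sublist.mpr List.mem_cons_self)
      simpa using this
    have hlt := hthird _ _ hsub
    have hble : b ∈ Finset.Icc 1 (n+1) := hmem b (by simp [hb])
    simp [Finset.mem_Icc] at hble
    omega
  subst hB'nil
  have hNC : (n+1) ∉ C := by
    simp [List.count_cons] at hct
    exact List.count_eq_zero.mp hct
  exact ⟨A, C, by simp, hA, hNC⟩

lemma sp_insert {n : ℕ} {w : List ℕ} (hw : IsStirlingPerm n w) (i : ℕ) (hi : i ≤ 2 * n) :
    IsStirlingPerm (n+1) (w.take i ++ (n+1) :: (n+1) :: w.drop i) := by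
  have hmem := mem_Icc_of_sp hw
  obtain ⟨hlen, hcount, hthird⟩ := hw
  have hthird' := (third_iff w).mp hthird
  have hNw : (n+1) ∉ w := by
    intro h
    have := hmem _ h
    simp [Finset.mem_Icc] at this
  have hTD : w.take i ++ w.drop i = w := List.take_append_drop i w
  refine ⟨?_, ?_, ?_⟩
  · simp [List.length_append, List.length_take, List.length_drop, hlen]
    omega
  · intro k hk
    simp only [Finset.mem_Icc] at hk
    have hTDc : (w.take i).count k + (w.drop i).count k = w.count k := by
      rw [← List.count_append, hTD]
    by_cases hkN : k = n + 1
    · subst hkN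
      have h0 : w.count (n+1) = 0 := List.count_eq_zero_of_not_mem hNw
      simp [List.count_append, List.count_cons]
      omega
    · have h2 : w.count k = 2 := hcount k (by simp [Finset.mem_Icc]; omega)
      simp [List.count_append, List.count_cons, hkN, Ne.symm hkN]
      omega
  · rw [third_iff]
    intro k m hs
    have hcnt := hs.count_le (n+1)
    rw [List.sublist_append_iff] at hs
    obtain ⟨s, tu, heq, hsA, htu⟩ := hs
    rw [show ((n+1) :: (n+1) :: w.drop i) = [(n+1), (n+1)] ++ w.drop i from rfl,
      List.sublist_append_iff] at htu
    obtain ⟨t, u, rfl, ht, hu⟩ := htu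
    have hsw : s ++ u <+ w := by
      rw [← hTD]
      exact Sublist.append hsA hu
    have htN : ∀ x ∈ t, x = n + 1 := by
      intro x hx
      have := ht.subset hx
      simp at this
      tauto
    have hksu : ∀ x, x ∈ s ∨ x ∈ u → x ∈ w := fun x hx => hsw.subset (by
      rcases hx with hx | hx
      · exact List.mem_append_left _ hx
      · exact List.mem_append_right _ hx)
    by_cases hkN : k = n + 1
    · -- derive False
      exfalso
      subst hkN
      -- no (n+1) in s or u
      have hNs : (n+1) ∉ s := fun h => hNw (hksu _ (Or.inl h))
      have hNu : (n+1) ∉ u := fun h => hNw (hksu _ (Or.inr h))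
      -- count (n+1) in [k,m,k] is at least 2, count in v is 2
      have hcv : ((w.take i ++ (n+1) :: (n+1) :: w.drop i).count (n+1)) = 2 := by
        have h0 : w.count (n+1) = 0 := List.count_eq_zero_of_not_mem hNw
        have : (w.take i).count (n+1) + (w.drop i).count (n+1) = 0 := by
          rw [← List.count_append, hTD, h0]
        simp [List.count_append, List.count_cons]
        omega
      rw [hcv] at hcnt
      have hmN : m ≠ n + 1 := by
        intro hm
        subst hm
        simp [List.count_cons] at hcnt
      -- so count (n+1) [n+1,m,n+1] = 2, all in t, t <+ [N,N], so t = [N,N]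
      have hct : t.count (n+1) = 2 := by
        have := congrArg (List.count (n+1)) heq
        simp [List.count_append, List.count_eq_zero_of_not_mem hNs,
          List.count_eq_zero_of_not_mem hNu, List.count_cons, hmN] at this
        omega
      have htlen : 2 ≤ t.length := by
        calc 2 = t.count (n+1) := hct.symm
        _ ≤ t.length := List.count_le_length
      have ht2 : t = [(n+1), (n+1)] := ht.eq_of_length_le (by simpa using htlen)
      subst ht2
      -- s ++ [N,N] ++ u = [N,m,N], |s| + |u| = 1
      rcases s with _ | ⟨a, s⟩
      · simp only [List.nil_append, List.cons_append] at heq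
        have : m = n + 1 := by
          have := congrArg (fun l => l[1]?) heq
          simpa using this
        exact hmN this
      · rcases s with _ | ⟨b, s⟩
        · have : a = n + 1 := by
            have h0 := congrArg (fun l => l[0]?) heq
            exact (by simpa using h0 : n + 1 = a).symm
          exact hNs (by simp [this])
        · have := congrArg List.length heq
          simp [List.length_append] at this
          omega
    · -- k ≠ n+1
      have hkw : k ∈ w := by
        have hk3 : k ∈ s ++ (t ++ u) := by rw [← heq]; simp
        simp only [List.mem_append] at hk3
        rcases hk3 with hk | hk | hk
        · exact hksu _ (Or.inl hk)
        · exact absurd (htN _ hk) hkN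
        · exact hksu _ (Or.inr hk)
      have hkle : k ≤ n := by
        have := hmem _ hkw
        simp [Finset.mem_Icc] at this
        omega
      by_cases hmN : m = n + 1
      · omega
      · have htnil : t = [] := by
          rw [List.eq_nil_iff_forall_not_mem]
          intro x hx
          have hxN := htN _ hx
          have hx3 : x ∈ [k, m, k] := by rw [heq]; simp [hx]
          simp at hx3
          rcases hx3 with hx3 | hx3 | hx3 <;> subst hx3
          · exact hkN hxN
          · exact hmN hxN
          · exact hkN hxN
        subst htnil
        simp only [List.nil_append] at heq
        rw [← heq] at hsw
        exact hthird' k m hsw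

lemma sp_delete {n : ℕ} {A B : List ℕ}
    (hv : IsStirlingPerm (n+1) (A ++ (n+1) :: (n+1) :: B)) :
    IsStirlingPerm n (A ++ B) := by
  obtain ⟨hlen, hcount, hthird⟩ := hv
  have hthird' := (third_iff _).mp hthird
  refine ⟨?_, ?_, ?_⟩
  · simp [List.length_append] at hlen ⊢
    omega
  · intro k hk
    simp only [Finset.mem_Icc] at hk
    have h2 : (A ++ (n+1) :: (n+1) :: B).count k = 2 :=
      hcount k (by simp [Finset.mem_Icc]; omega)
    have hkN : k ≠ n + 1 := by omega
    simp [List.count_append, List.count_cons, hkN, Ne.symm hkN] at h2 ⊢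
    omega
  · rw [third_iff]
    intro k m hs
    rw [List.sublist_append_iff] at hs
    obtain ⟨s, u, heq, hsA, huB⟩ := hs
    have : s ++ u <+ A ++ (n+1) :: (n+1) :: B :=
      Sublist.append hsA (huB.trans ((List.sublist_cons_self _ _).trans
        (List.sublist_cons_self _ _)))
    rw [← heq] at this
    exact hthird' k m this

lemma sp_zero : ∀ w, IsStirlingPerm 0 w ↔ w = [] := by
  intro w
  constructor
  · intro h
    exact List.length_eq_zero_iff.mp (by simpa using h.1)
  · rintro rfl
    exact ⟨by simp, by simp, fun i => i.elim0⟩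

/-- The number of Stirling permutations of size `n` is the double factorial `(2n-1)!!`. -/
theorem card_stirling_perms (n : ℕ) :
    Nat.card {w : List ℕ // IsStirlingPerm n w} = Nat.doubleFactorial (2 * n - 1) := by
  induction n with
  | zero =>
    haveI : Unique {w : List ℕ // IsStirlingPerm 0 w} :=
      { default := ⟨[], (sp_zero []).mpr rfl⟩
        uniq := fun ⟨w, hw⟩ => Subtype.ext ((sp_zero w).mp hw) }
    simp [Nat.card_unique]
  | succ n ih =>
    -- the insertion map
    set F : {w : List ℕ // IsStirlingPerm n w} × Fin (2 * n + 1) →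
        {v : List ℕ // IsStirlingPerm (n+1) v} :=
      fun p => ⟨p.1.val.take p.2.val ++ (n+1) :: (n+1) :: p.1.val.drop p.2.val,
        sp_insert p.1.property p.2.val (by omega)⟩ with hF
    have hNnotmem : ∀ (w : List ℕ), IsStirlingPerm n w → (n+1) ∉ w := by
      intro w hw h
      have := mem_Icc_of_sp hw _ h
      simp [Finset.mem_Icc] at this
    have hidx : ∀ (w : List ℕ) (hw : IsStirlingPerm n w) (i : ℕ), i ≤ 2 * n →
        (w.take i ++ (n+1) :: (n+1) :: w.drop i).idxOf (n+1) = i := by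
      intro w hw i hile
      have hnot : (n+1) ∉ w.take i := fun h => hNnotmem w hw ((List.take_sublist i w).subset h)
      rw [List.idxOf_append_of_notMem hnot, List.idxOf_cons_self,
        List.length_take, hw.1]
      omega
    have hbij : Function.Bijective F := by
      constructor
      · rintro ⟨⟨w, hw⟩, i⟩ ⟨⟨w', hw'⟩, i'⟩ h
        simp only [hF, Subtype.mk.injEq] at h
        have hii' : i.val = i'.val := by
          have h1 := hidx w hw i.val (by omega)
          have h2 := hidx w' hw' i'.val (by omega)
          rw [← h1, ← h2, h]
        have hww' : w = w' := by
          have htake : w.take i.val = w'.take i'.val := by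
            have h0 := congrArg (List.take i.val) h
            rwa [List.take_left' (by simp [List.length_take, hw.1]; omega),
              List.take_left' (by simp [List.length_take, hw'.1]; omega)] at h0
          have hdrop : w.drop i.val = w'.drop i'.val := by
            have h0 := congrArg (List.drop (i.val + 2)) h
            rwa [show w.take i.val ++ (n+1) :: (n+1) :: w.drop i.val
                = (w.take i.val ++ [n+1, n+1]) ++ w.drop i.val by simp,
              List.drop_left' (by simp [List.length_take, hw.1]; omega),
              show w'.take i'.val ++ (n+1) :: (n+1) :: w'.drop i'.val
                = (w'.take i'.val ++ [n+1, n+1]) ++ w'.drop i'.val by simp,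
              List.drop_left' (by simp [List.length_take, hw'.1]; omega)] at h0
          conv_lhs => rw [← List.take_append_drop i'.val w]
          rw [← hii', htake, hdrop, List.take_append_drop]
        exact Prod.ext (Subtype.ext hww') (Fin.ext hii')
      · rintro ⟨v, hv⟩
        obtain ⟨A, B, rfl, hA, hB⟩ := sp_decomp hv
        have hsp : IsStirlingPerm n (A ++ B) := sp_delete hv
        have hAlen : A.length ≤ 2 * n := by
          have := hsp.1
          simp [List.length_append] at this
          omega
        refine ⟨⟨⟨A ++ B, hsp⟩, ⟨A.length, by omega⟩⟩, ?_⟩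
        simp only [hF]
        apply Subtype.ext
        simp only
        rw [List.take_left' rfl, List.drop_left' rfl]
    have hcard := Nat.card_eq_of_bijective F hbij
    rw [← hcard, Nat.card_prod, ih, Nat.card_eq_fintype_card, Fintype.card_fin]
    rcases n with _ | m
    · simp [Nat.doubleFactorial]
    · calc Nat.doubleFactorial (2 * (m+1) - 1) * (2 * (m+1) + 1)
          = (2 * (m+1) - 1 + 2) * Nat.doubleFactorial (2 * (m+1) - 1) := by
            rw [mul_comm, show 2 * (m+1) + 1 = 2 * (m+1) - 1 + 2 from by omega]
      _ = Nat.doubleFactorial (2 * (m+1) - 1 + 2) := (Nat.doubleFactorial_add_two _).symm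
      _ = Nat.doubleFactorial (2 * (m+1+1) - 1) := by
            rw [show 2 * (m+1+1) - 1 = 2 * (m+1) - 1 + 2 from by omega]
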